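/- Fix the alphabet A = {0,1,2,3} and p = 21. For every square-free word v over A and every letter a ∈ A, Λ(va) = Λ(Λ(v)a), where Λ(w) is the longest suffix of w whose normalization belongs to Λ. -/

import Mathlib

open scoped Classical

/-- A square is a word of the form `u ++ u` with `u` nonempty. -/
def IsSquareWord {α : Type*} (w : List α) : Prop :=
  ∃ u : List α, u ≠ [] ∧ w = u ++ u

/-- A word is square-free if no factor of it is a square. -/
def SquareFree {α : Type*} (w : List α) : Prop :=
  ∀ t : List α, t <:+: w → ¬ IsSquareWord t

/-- `w` contains a square of period at most `p`. -/
def ContainsSquarePeriodLe {α : Type*} (p : ℕ) (w : List α) : Prop :=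
  ∃ u : List α, u ≠ [] ∧ u.length ≤ p ∧ (u ++ u) <:+: w

/-- A square is minimal if no proper factor of it is a square. -/
def MinimalSquare {α : Type*} (s : List α) : Prop :=
  IsSquareWord s ∧ ∀ t : List α, t <:+: s → t.length < s.length → ¬ IsSquareWord t

/-- The normalization of a word over `{0,1,2,3}`: the lexicographically smallest
word among all its images under permutations of the alphabet. -/
noncomputable def norm4 (u : List (Fin 4)) : List (Fin 4) :=
  (Finset.image (fun π : Equiv.Perm (Fin 4) => u.map π) Finset.univ).min'
    ⟨u, Finset.mem_image.mpr ⟨Equiv.refl _, Finset.mem_univ _, by simp⟩⟩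

/-- `Λ`: the set of normalized square-free prefixes of minimal squares of period
at most `21`. -/
def Lambda : Set (List (Fin 4)) :=
  {w | norm4 w = w ∧ SquareFree w ∧
    ∃ u : List (Fin 4), u ≠ [] ∧ u.length ≤ 21 ∧ MinimalSquare (u ++ u) ∧ w <+: u ++ u}

/-- `Λ(w)`: the longest suffix of `w` whose normalization belongs to `Λ`. -/
noncomputable def lambdaOf (w : List (Fin 4)) : List (Fin 4) :=
  (w.tails.find? fun s => decide (norm4 s ∈ Lambda)).getD []

/- ### Auxiliary lemmas -/

lemma exists_perm_norm4 (u : List (Fin 4)) : ∃ π : Equiv.Perm (Fin 4), norm4 u = u.map π := by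
  have h := Finset.min'_mem (Finset.image (fun π : Equiv.Perm (Fin 4) => u.map π) Finset.univ)
    ⟨u, Finset.mem_image.mpr ⟨Equiv.refl _, Finset.mem_univ _, by simp⟩⟩
  rw [Finset.mem_image] at h
  obtain ⟨π, -, hπ⟩ := h
  exact ⟨π, hπ.symm⟩

lemma norm4_map (u : List (Fin 4)) (π : Equiv.Perm (Fin 4)) :
    norm4 (u.map π) = norm4 u := by
  have himg : Finset.image (fun σ : Equiv.Perm (Fin 4) => (u.map π).map σ) Finset.univ
      = Finset.image (fun σ : Equiv.Perm (Fin 4) => u.map σ) Finset.univ := by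
    ext x
    simp only [Finset.mem_image, Finset.mem_univ, true_and]
    constructor
    · rintro ⟨σ, rfl⟩
      exact ⟨π.trans σ, by simp [List.map_map]⟩
    · rintro ⟨τ, rfl⟩
      refine ⟨π.symm.trans τ, ?_⟩
      simp [List.map_map, Function.comp]
  unfold norm4
  apply le_antisymm
  · apply Finset.min'_le
    rw [himg]
    exact Finset.min'_mem _ _
  · apply Finset.min'_le
    rw [← himg]
    exact Finset.min'_mem _ _

lemma norm4_idem (u : List (Fin 4)) : norm4 (norm4 u) = norm4 u := by
  obtain ⟨π, hπ⟩ := exists_perm_norm4 u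
  conv_lhs => rw [hπ]
  rw [norm4_map]

lemma isSquareWord_map {α β : Type*} (f : α → β) {w : List α} (h : IsSquareWord w) :
    IsSquareWord (w.map f) := by
  obtain ⟨u, hu, rfl⟩ := h
  exact ⟨u.map f, by simpa using hu, by simp⟩

lemma squareFree_map {w : List (Fin 4)} (π : Equiv.Perm (Fin 4)) (h : SquareFree w) :
    SquareFree (w.map π) := by
  intro t ht hsq
  have h1 : t.map π.symm <:+: (w.map ⇑π).map ⇑π.symm := ht.map _
  rw [List.map_map, Equiv.symm_comp_self, List.map_id] at h1
  exact h _ h1 (isSquareWord_map _ hsq)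

lemma squareFree_infix {α : Type*} {t w : List α} (h : SquareFree w) (ht : t <:+: w) :
    SquareFree t := fun s hs => h s (hs.trans ht)

lemma minimalSquare_map {s : List (Fin 4)} (π : Equiv.Perm (Fin 4)) (h : MinimalSquare s) :
    MinimalSquare (s.map π) := by
  refine ⟨isSquareWord_map _ h.1, ?_⟩
  intro t ht hlen hsq
  have h1 : t.map π.symm <:+: (s.map ⇑π).map ⇑π.symm := ht.map _
  rw [List.map_map, Equiv.symm_comp_self, List.map_id] at h1
  refine h.2 (t.map π.symm) h1 ?_ (isSquareWord_map _ hsq)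
  simpa using hlen

lemma norm4_nil : norm4 ([] : List (Fin 4)) = [] := by
  obtain ⟨π, hπ⟩ := exists_perm_norm4 []
  simpa using hπ

lemma nil_mem_Lambda : ([] : List (Fin 4)) ∈ Lambda := by
  have hnorm := norm4_nil
  refine ⟨hnorm, ?_, [0], by simp, by simp, ?_, List.nil_prefix⟩
  · intro t ht hsq
    obtain ⟨u, hu, rfl⟩ := hsq
    simp only [List.infix_nil, List.append_eq_nil_iff] at ht
    exact hu ht.1
  · refine ⟨⟨[0], by simp, rfl⟩, ?_⟩
    intro t ht hlen hsq
    obtain ⟨u, hu, rfl⟩ := hsq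
    have : 1 ≤ u.length := List.length_pos_iff.mpr hu
    simp at hlen
    omega

/-- The key closure property: if `norm4 (x ++ [a]) ∈ Lambda` then `norm4 x ∈ Lambda`. -/
lemma norm4_mem_Lambda_of_append {x : List (Fin 4)} {a : Fin 4}
    (h : norm4 (x ++ [a]) ∈ Lambda) : norm4 x ∈ Lambda := by
  obtain ⟨π, hπ⟩ := exists_perm_norm4 (x ++ [a])
  obtain ⟨h1, h2, u, hu0, hu21, humin, hpre⟩ := h
  rw [hπ] at h2 hpre
  -- y = x.map π is a square-free prefix of u ++ u
  set y : List (Fin 4) := x.map π with hy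
  have hy_pre : y <+: u ++ u := by
    refine List.IsPrefix.trans ?_ hpre
    rw [List.map_append]
    exact ⟨[π a], by simp [hy]⟩
  have hy_sf : SquareFree y := by
    refine squareFree_infix h2 ?_
    rw [List.map_append]
    exact (List.prefix_append y [π a]).isInfix
  -- now normalize y
  obtain ⟨σ, hσ⟩ := exists_perm_norm4 y
  have hxy : norm4 x = norm4 y := (norm4_map x π).symm
  rw [hxy]
  refine ⟨norm4_idem y, ?_, u.map σ, by simpa using hu0, by simpa using hu21, ?_, ?_⟩
  · rw [hσ]; exact squareFree_map σ hy_sf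
  · rw [← List.map_append]
    exact minimalSquare_map σ humin
  · rw [hσ, ← List.map_append]
    exact hy_pre.map _

/-- Characterization of `find?` on `tails`. -/
lemma tails_find?_spec (p : List (Fin 4) → Bool) (hnil : p [] = true) (w : List (Fin 4)) :
    ∃ r, w.tails.find? p = some r ∧ r <:+ w ∧ p r = true ∧
      ∀ s, s <:+ w → p s = true → s <:+ r := by
  induction w with
  | nil =>
    refine ⟨[], by simp [hnil], List.nil_suffix, hnil, ?_⟩
    intro s hs _
    simpa using hs
  | cons b w ih =>
    rw [List.tails_cons, List.find?_cons]
    by_cases hb : p (b :: w) = true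
    · rw [hb]
      exact ⟨b :: w, rfl, List.suffix_refl _, hb, fun s hs _ => hs⟩
    · rw [Bool.not_eq_true] at hb
      rw [hb]
      obtain ⟨r, hfind, hsuf, hp, hmax⟩ := ih
      refine ⟨r, hfind, hsuf.trans (List.suffix_cons b w), hp, ?_⟩
      intro s hs hps
      rcases List.suffix_cons_iff.mp hs with rfl | hs'
      · rw [hps] at hb; exact absurd hb (by simp)
      · exact hmax s hs' hps

lemma lambdaOf_spec (w : List (Fin 4)) :
    lambdaOf w <:+ w ∧ norm4 (lambdaOf w) ∈ Lambda ∧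
      ∀ s, s <:+ w → norm4 s ∈ Lambda → s <:+ lambdaOf w := by
  obtain ⟨r, hfind, hsuf, hp, hmax⟩ := tails_find?_spec
    (fun s => decide (norm4 s ∈ Lambda)) (by simp [norm4_nil, nil_mem_Lambda]) w
  have hl : lambdaOf w = r := by rw [lambdaOf, hfind]; rfl
  rw [hl]
  refine ⟨hsuf, by simpa using hp, ?_⟩
  intro s hs hmem
  exact hmax s hs (by simpa using hmem)

/-- For every square-free word `v` over `{0,1,2,3}` and every letter `a`,
`Λ(va) = Λ(Λ(v)a)`. -/
theorem stmt11 (v : List (Fin 4)) (hv : SquareFree v) (a : Fin 4) :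
    lambdaOf (v ++ [a]) = lambdaOf (lambdaOf v ++ [a]) := by
  obtain ⟨hLsuf, hLmem, hLmax⟩ := lambdaOf_spec v
  obtain ⟨h1suf, h1mem, h1max⟩ := lambdaOf_spec (v ++ [a])
  obtain ⟨h2suf, h2mem, h2max⟩ := lambdaOf_spec (lambdaOf v ++ [a])
  have hLa : lambdaOf v ++ [a] <:+ v ++ [a] := by
    obtain ⟨t, ht⟩ := hLsuf
    exact ⟨t, by rw [← List.append_assoc, ht]⟩
  apply List.Sublist.antisymm
  · -- lambdaOf (v ++ [a]) <:+ lambdaOf (lambdaOf v ++ [a])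
    refine (h2max _ ?_ h1mem).sublist
    set R := lambdaOf (v ++ [a]) with hR
    rcases eq_or_ne R [] with hRnil | hRne
    · rw [hRnil]; exact List.nil_suffix
    · -- R = d ++ [a] with d <:+ v
      obtain ⟨t, ht⟩ := h1suf
      have hR2 : R = R.dropLast ++ [R.getLast hRne] := (List.dropLast_append_getLast hRne).symm
      rw [hR2, ← List.append_assoc] at ht
      have := List.append_inj' ht (by simp)
      obtain ⟨htv, hla⟩ := this
      have hlast : R.getLast hRne = a := by
        have := List.cons.injEq (R.getLast hRne) [] a [] ▸ hla
        simpa using hla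
      have hd : R.dropLast <:+ v := ⟨t, htv⟩
      have hdmem : norm4 R.dropLast ∈ Lambda := by
        apply norm4_mem_Lambda_of_append (a := a)
        rwa [← hlast, ← hR2]
      have hdL : R.dropLast <:+ lambdaOf v := hLmax _ hd hdmem
      rw [hR2, hlast]
      obtain ⟨t', ht'⟩ := hdL
      exact ⟨t', by rw [← List.append_assoc, ht']⟩
  · -- lambdaOf (lambdaOf v ++ [a]) <:+ lambdaOf (v ++ [a])
    exact (h1max _ (h2suf.trans hLa) h2mem).sublist
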